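/- For every p ∈ ℝ, the super density matrix ϱ, defined as the outer product with (i,j) entry (ψ p 1 0)ᵢ * (ψ† p 1 0)ⱼ, equals the matrix with rows (1 + p²•E, 0, p•η'), (0, 0, 0), (p•η, 0, p²•E), and its supertrace ϱ₀₀ + ϱ₁₁ - ϱ₂₂ equals 1. -/

import Mathlib

noncomputable section

abbrev Λ : Type := ExteriorAlgebra ℂ (Fin 2 → ℂ)

def η : Λ := ExteriorAlgebra.ι ℂ (Pi.single 0 1)

def η' : Λ := ExteriorAlgebra.ι ℂ (Pi.single 1 1)

def E : Λ := η * η'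

/-- The superqubit ket `ψ p α β`. -/
def ψ (p : ℝ) (α β : ℂ) : Fin 3 → Λ :=
  ![α • (1 + ((p ^ 2 / 2 : ℝ) : ℂ) • E),
    β • (1 + ((p ^ 2 / 2 : ℝ) : ℂ) • E),
    (p : ℂ) • (α • η - β • η')]

/-- The superqubit bra `ψ† p α β`. -/
def ψbra (p : ℝ) (α β : ℂ) : Fin 3 → Λ :=
  ![(starRingEnd ℂ α) • (1 + ((p ^ 2 / 2 : ℝ) : ℂ) • E),
    (starRingEnd ℂ β) • (1 + ((p ^ 2 / 2 : ℝ) : ℂ) • E),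
    (p : ℂ) • ((starRingEnd ℂ α) • η' + (starRingEnd ℂ β) • η)]

/-- The super density matrix `ϱ = |ψ⟩⟨ψ|` for `α = 1`, `β = 0`. -/
def ϱ (p : ℝ) : Matrix (Fin 3) (Fin 3) Λ :=
  Matrix.of fun i j => ψ p 1 0 i * ψbra p 1 0 j

lemma eta_sq : η * η = 0 := ExteriorAlgebra.ι_sq_zero _
lemma eta'_sq : η' * η' = 0 := ExteriorAlgebra.ι_sq_zero _
lemma etaE : η * E = 0 := by rw [E, ← mul_assoc, eta_sq, zero_mul]
lemma Eeta' : E * η' = 0 := by rw [E, mul_assoc, eta'_sq, mul_zero]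
lemma swap : η' * η = -(η * η') := by
  have h := ExteriorAlgebra.ι_add_mul_swap (R := ℂ) (Pi.single 0 1 : Fin 2 → ℂ) (Pi.single 1 1)
  rw [eq_neg_iff_add_eq_zero, add_comm]
  exact h
lemma EE : E * E = 0 := by
  have h : η * η' * η' = 0 := by rw [mul_assoc, eta'_sq, mul_zero]
  rw [E, mul_assoc, ← mul_assoc η' η η', swap, neg_mul, h, neg_zero, mul_zero]

theorem super_density_matrix (p : ℝ) :
    ϱ p =
      !![1 + ((p ^ 2 : ℝ) : ℂ) • E, 0, (p : ℂ) • η';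
         0, 0, 0;
         (p : ℂ) • η, 0, ((p ^ 2 : ℝ) : ℂ) • E] ∧
    ϱ p 0 0 + ϱ p 1 1 - ϱ p 2 2 = 1 := by
  have hmat : ϱ p =
      !![1 + ((p ^ 2 : ℝ) : ℂ) • E, 0, (p : ℂ) • η';
         0, 0, 0;
         (p : ℂ) • η, 0, ((p ^ 2 : ℝ) : ℂ) • E] := by
    ext i j
    fin_cases i <;> fin_cases j <;>
      simp [ϱ, ψ, ψbra, mul_add, add_mul, smul_smul, mul_smul_comm, smul_mul_assoc,
        EE, etaE, Eeta']
    · rw [add_assoc, ← add_smul]; norm_num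
    · rw [← E]; simp only [sq, ← Complex.ofReal_mul, Complex.coe_smul]
  refine ⟨hmat, ?_⟩
  rw [hmat]
  simp
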